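/- Continuity of the operator T_w (Lemma A.2): for every world w, the operator T_w on the complete lattice of local name assignments (ordered pointwise) is continuous, i.e., it is monotone and for every increasing sequence l_0 ≤ l_1 ≤ … with pointwise supremum l_ω one has T_w(l_ω) equal to the pointwise supremum of the sequence T_w(l_0) ≤ T_w(l_1) ≤ …. -/
import Mathlib


/-- Principal expressions over keys `K`, global names `G`, local names `N`. -/
inductive PExp (K G N : Type*) where
  | key : K → PExp K G N
  | glob : G → PExp K G N
  | loc : N → PExp K G N
  | s : PExp K G N → PExp K G N → PExp K G N

/-- Formulas of LLNC. -/
inductive Fml (K G N : Type*) where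
  | bdto : PExp K G N → PExp K G N → Fml K G N
  | cert : K → Fml K G N → Fml K G N
  | not : Fml K G N → Fml K G N
  | and : Fml K G N → Fml K G N → Fml K G N

/-- A world: an interpretation of global names and an assignment of
certificates to keys, with only finitely many certificates issued. -/
structure World (K G N : Type*) where
  beta : G → Set K
  certs : K → Set (Fml K G N)
  finite_certs : (⋃ k, certs k).Finite

variable {K G N : Type*}

/-- The interpretation of a principal expression relative to a world, a
local name assignment, and a key. -/
def interp (w : World K G N) (l : K → N → Set K) : PExp K G N → K → Set K
  | .key k', _ => {k'}
  | .glob g, _ => w.beta g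
  | .loc n, k => l k n
  | .s p q, k => ⋃ k' ∈ interp w l p k, interp w l q k'

/-- Satisfaction of a formula at a world, local name assignment, and key. -/
def Sat (w : World K G N) (l : K → N → Set K) (k : K) : Fml K G N → Prop
  | .bdto p q => interp w l q k ⊆ interp w l p k
  | .cert k' φ => φ ∈ w.certs k'
  | .not φ => ¬ Sat w l k φ
  | .and φ ψ => Sat w l k φ ∧ Sat w l k ψ

/-- A local name assignment is consistent with a world if every issued
binding certificate holds at the issuer. -/
def Consistent (w : World K G N) (l : K → N → Set K) : Prop :=
  ∀ (k : K) (n : N) (p : PExp K G N),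
    Fml.bdto (.loc n) p ∈ w.certs k → Sat w l k (.bdto (.loc n) p)

/-- The operator `T_w` on local name assignments. -/
def Tw (w : World K G N) (l : K → N → Set K) : K → N → Set K :=
  fun k n => ⋃ p ∈ {p : PExp K G N | Fml.bdto (.loc n) p ∈ w.certs k}, interp w l p k


lemma interp_mono (w : World K G N) {l l' : K → N → Set K}
    (h : ∀ k n, l k n ⊆ l' k n) (p : PExp K G N) (k : K) :
    interp w l p k ⊆ interp w l' p k := by
  induction p generalizing k with
  | key k' => exact subset_rfl
  | glob g => exact subset_rfl
  | loc n => exact h k n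
  | s p q ihp ihq =>
    intro x hx
    simp only [interp, Set.mem_iUnion] at hx ⊢
    obtain ⟨k', hk', hx⟩ := hx
    exact ⟨k', ihp k hk', ihq k' hx⟩

lemma lseq_mono {lseq : ℕ → K → N → Set K}
    (h : ∀ m k n, lseq m k n ⊆ lseq (m + 1) k n) {m m' : ℕ} (hm : m ≤ m') :
    ∀ k n, lseq m k n ⊆ lseq m' k n := by
  induction hm with
  | refl => exact fun k n => subset_rfl
  | @step m'' _ ih => exact fun k n => (ih k n).trans (h m'' k n)

lemma interp_sup (w : World K G N) (lseq : ℕ → K → N → Set K)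
    (h : ∀ m k n, lseq m k n ⊆ lseq (m + 1) k n) (p : PExp K G N) (k : K) :
    interp w (fun k' n' => ⋃ m : ℕ, lseq m k' n') p k = ⋃ m : ℕ, interp w (lseq m) p k := by
  induction p generalizing k with
  | key k' => simp [interp]
  | glob g => simp only [interp]; exact (Set.iUnion_const _).symm
  | loc n => simp [interp]
  | s p q ihp ihq =>
    ext x
    simp only [interp, Set.mem_iUnion]
    constructor
    · rintro ⟨k', hk', hx⟩
      rw [ihp] at hk'; rw [ihq] at hx
      simp only [Set.mem_iUnion] at hk' hx
      obtain ⟨m1, hm1⟩ := hk'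
      obtain ⟨m2, hm2⟩ := hx
      refine ⟨max m1 m2, k', ?_, ?_⟩
      · exact interp_mono w (lseq_mono h (le_max_left m1 m2)) p k hm1
      · exact interp_mono w (lseq_mono h (le_max_right m1 m2)) q k' hm2
    · rintro ⟨m, k', hk', hx⟩
      refine ⟨k', ?_, ?_⟩
      · rw [ihp]; exact Set.mem_iUnion.2 ⟨m, hk'⟩
      · rw [ihq]; exact Set.mem_iUnion.2 ⟨m, hx⟩

/-- Lemma A.2: `T_w` is continuous: it is monotone, and it carries
the pointwise supremum of any increasing sequence of local name assignments to
the pointwise supremum of the image sequence. -/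
theorem Tw_continuous [Nonempty K] (w : World K G N) :
    (∀ l l' : K → N → Set K, (∀ (k : K) (n : N), l k n ⊆ l' k n) →
      ∀ (k : K) (n : N), Tw w l k n ⊆ Tw w l' k n) ∧
    (∀ lseq : ℕ → K → N → Set K, (∀ (m : ℕ) (k : K) (n : N), lseq m k n ⊆ lseq (m + 1) k n) →
      ∀ (k : K) (n : N), Tw w (fun k' n' => ⋃ m : ℕ, lseq m k' n') k n = ⋃ m : ℕ, Tw w (lseq m) k n) := by
  constructor
  · intro l l' h k n x hx
    simp only [Tw, Set.mem_iUnion] at hx ⊢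
    obtain ⟨p, hp, hx⟩ := hx
    exact ⟨p, hp, interp_mono w h p k hx⟩
  · intro lseq h k n
    ext x
    simp only [Tw, Set.mem_iUnion]
    constructor
    · rintro ⟨p, hp, hx⟩
      rw [interp_sup w lseq h] at hx
      obtain ⟨m, hm⟩ := Set.mem_iUnion.1 hx
      exact ⟨m, p, hp, hm⟩
    · rintro ⟨m, p, hp, hx⟩
      refine ⟨p, hp, ?_⟩
      rw [interp_sup w lseq h]
      exact Set.mem_iUnion.2 ⟨m, hx⟩
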